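/- arXiv:1212.4269 — 3 statements merged into one kernel-verified Lean document; each statement's English description precedes it below -/
import Mathlib

section
/- The density of the Poisson(λ)-Erlang(μ) compound at y > 0 can be written in closed form as f(y) = e^{-λ - y/μ} · sqrt(λ/(μ y)) · I_1(2 sqrt(λ y / μ)), where I_1 is the modified Bessel function of the first kind of order 1. -/
open scoped Nat

/-- The modified Bessel function of the first kind of order 1, via its power series. -/
noncomputable def besselI1 (x : ℝ) : ℝ :=
  ∑' k : ℕ, (x / 2) ^ (2 * k + 1) / ((k ! : ℝ) * ((k + 1)! : ℝ))

/-- Poisson PMF with mean `λ`. -/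
noncomputable def poissonPMF (l : ℝ) (k : ℕ) : ℝ := Real.exp (-l) * l ^ k / (k ! : ℝ)

/-- Erlang density with shape `k ≥ 1` and scale `μ`, at `y > 0`. -/
noncomputable def erlangPDF (k : ℕ) (μ y : ℝ) : ℝ :=
  y ^ (k - 1) * Real.exp (-(y / μ)) / (μ ^ k * ((k - 1)! : ℝ))

/-- Closed form of the Poisson(λ)-Erlang(μ) compound density at `y > 0`:
`f(y) = e^{-λ - y/μ} √(λ/(μy)) I₁(2√(λy/μ))`. -/
theorem compound_poisson_erlang_density_closed_form (l μ y : ℝ)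
    (hl : 0 < l) (hμ : 0 < μ) (hy : 0 < y) :
    (∑' k : ℕ, poissonPMF l (k + 1) * erlangPDF (k + 1) μ y)
      = Real.exp (-l - y / μ) * Real.sqrt (l / (μ * y)) *
          besselI1 (2 * Real.sqrt (l * y / μ)) := by
  rw [besselI1, ← tsum_mul_left]
  refine tsum_congr fun k => ?_
  have h2 : 2 * Real.sqrt (l * y / μ) / 2 = Real.sqrt (l * y / μ) := by ring
  rw [h2]
  have hs : Real.sqrt (l * y / μ) ^ (2 * k + 1)
      = (l * y / μ) ^ k * Real.sqrt (l * y / μ) := by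
    rw [pow_succ, pow_mul, Real.sq_sqrt (by positivity)]
  have hss : Real.sqrt (l / (μ * y)) * Real.sqrt (l * y / μ) = l / μ := by
    rw [← Real.sqrt_mul (by positivity)]
    have : l / (μ * y) * (l * y / μ) = (l / μ) ^ 2 := by
      field_simp
    rw [this, Real.sqrt_sq (by positivity)]
  have hexp : Real.exp (-l - y / μ) = Real.exp (-l) * Real.exp (-(y / μ)) := by
    rw [← Real.exp_add]; ring_nf
  simp only [poissonPMF, erlangPDF, Nat.add_sub_cancel, hs, hexp]
  have hf1 : ((k + 1)! : ℝ) ≠ 0 := Nat.cast_ne_zero.mpr (Nat.factorial_ne_zero _)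
  have hf2 : ((k)! : ℝ) ≠ 0 := Nat.cast_ne_zero.mpr (Nat.factorial_ne_zero _)
  rw [mul_comm (Real.sqrt (l / (μ * y)))] at *
  have key : Real.exp (-l) * Real.exp (-(y / μ)) * Real.sqrt (l / (μ * y)) *
      ((l * y / μ) ^ k * Real.sqrt (l * y / μ) / ((k ! : ℝ) * ((k + 1)! : ℝ)))
      = Real.exp (-l) * Real.exp (-(y / μ)) * (l / μ) *
      ((l * y / μ) ^ k / ((k ! : ℝ) * ((k + 1)! : ℝ))) := by
    rw [← hss]; ring
  rw [key]
  field_simp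
  have hμk : μ ^ k * μ⁻¹ ^ k = 1 := by rw [← mul_pow, mul_inv_cancel₀ hμ.ne', one_pow]
  linear_combination (-(l * l ^ k * y ^ k * μ)) * hμk
end

section
/- The function g(x) = x · I_1(x) is strictly log-concave on (0, ∞); that is, log(x · I_1(x)) is strictly concave for x > 0. -/
open scoped Nat

/-- `I₀`, the modified Bessel function of order 0. -/
noncomputable def bI0 (x : ℝ) : ℝ :=
  ∑' k : ℕ, (x / 2) ^ (2 * k) / ((k ! : ℝ) * (k ! : ℝ))

/-- The termwise derivative series of `besselI1`. -/
noncomputable def bI1d (x : ℝ) : ℝ :=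
  ∑' k : ℕ, ((2*k+1 : ℕ) : ℝ) * (x / 2) ^ (2 * k) * (1/2) / ((k ! : ℝ) * ((k + 1)! : ℝ))


lemma fact_pos' (k : ℕ) : (0:ℝ) < (k ! : ℝ) := Nat.cast_pos.mpr k.factorial_pos
lemma fact_ge_one (k : ℕ) : (1:ℝ) ≤ (k ! : ℝ) := by exact_mod_cast k.factorial_pos
lemma fact_succ' (k : ℕ) : ((k+1)! : ℝ) = ((k:ℝ)+1) * (k ! : ℝ) := by
  push_cast [Nat.factorial_succ]; ring

lemma abs_sq_pow_eq (x : ℝ) (k : ℕ) : |x/2|^(2*k) = (x^2/4)^k := by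
  rw [pow_mul]; congr 1; rw [sq_abs]; ring

lemma sq_pow_eq (x : ℝ) (k : ℕ) : (x/2)^(2*k) = (x^2/4)^k := by
  rw [pow_mul]; congr 1; ring

lemma div_fact_le (a : ℝ) (ha : 0 ≤ a) (k m : ℕ) :
    a / ((k ! : ℝ) * (m ! : ℝ)) ≤ a / (k ! : ℝ) :=
  div_le_div_of_nonneg_left ha (fact_pos' k)
    (le_mul_of_one_le_right (fact_pos' k).le (fact_ge_one m))

lemma summable_I0 (x : ℝ) : Summable (fun k : ℕ => (x/2)^(2*k) / ((k ! : ℝ) * (k !))) := by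
  apply Summable.of_norm_bounded (Real.summable_pow_div_factorial (x^2/4))
  intro k
  calc ‖(x/2)^(2*k) / ((k ! : ℝ) * (k !))‖
      = (x^2/4)^k / ((k ! : ℝ) * (k !)) := by
        rw [Real.norm_eq_abs, abs_div, abs_pow, abs_sq_pow_eq,
          abs_of_pos (by positivity : (0:ℝ) < (k ! : ℝ) * k !)]
    _ ≤ (x^2/4)^k / (k ! : ℝ) := div_fact_le _ (by positivity) k k

lemma summable_I1 (x : ℝ) : Summable (fun k : ℕ => (x/2)^(2*k+1) / ((k ! : ℝ) * ((k+1)! : ℝ))) := by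
  apply Summable.of_norm_bounded ((Real.summable_pow_div_factorial (x^2/4)).mul_left |x/2|)
  intro k
  have hkf : (0:ℝ) < (k ! : ℝ) * ((k+1)! : ℝ) := by positivity
  calc ‖(x/2)^(2*k+1) / ((k ! : ℝ) * ((k+1)! : ℝ))‖
      = |x/2| * (x^2/4)^k / ((k ! : ℝ) * ((k+1)! : ℝ)) := by
        rw [Real.norm_eq_abs, abs_div, abs_pow, pow_succ, abs_sq_pow_eq, abs_of_pos hkf, mul_comm]
    _ ≤ |x/2| * ((x^2/4)^k / (k ! : ℝ)) := by
        rw [mul_div_assoc]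
        exact mul_le_mul_of_nonneg_left (div_fact_le _ (by positivity) k (k+1)) (abs_nonneg _)

lemma summable_I1d (x : ℝ) : Summable (fun k : ℕ =>
    ((2*k+1 : ℕ) : ℝ) * (x/2)^(2*k) * (1/2) / ((k ! : ℝ) * ((k+1)! : ℝ))) := by
  apply Summable.of_norm_bounded (Real.summable_pow_div_factorial (x^2/4))
  intro k
  have hkf : (0:ℝ) < (k ! : ℝ) * ((k+1)! : ℝ) := by positivity
  have h2 : |((2*k+1:ℕ):ℝ) * (x/2)^(2*k) * (1/2)| ≤ ((k:ℝ)+1) * (x^2/4)^k := by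
    rw [abs_mul, abs_mul, abs_pow, abs_sq_pow_eq,
      abs_of_nonneg (by positivity : (0:ℝ) ≤ ((2*k+1:ℕ):ℝ)),
      abs_of_nonneg (by norm_num : (0:ℝ) ≤ (1:ℝ)/2)]
    have h3 : ((2*k+1:ℕ):ℝ) * (1/2) ≤ (k:ℝ)+1 := by push_cast; linarith
    calc ((2*k+1:ℕ):ℝ) * (x^2/4)^k * (1/2)
        = (((2*k+1:ℕ):ℝ) * (1/2)) * (x^2/4)^k := by ring
      _ ≤ ((k:ℝ)+1) * (x^2/4)^k := mul_le_mul_of_nonneg_right h3 (by positivity)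
  calc ‖((2*k+1:ℕ):ℝ) * (x/2)^(2*k) * (1/2) / ((k ! : ℝ) * ((k+1)! : ℝ))‖
      ≤ ((k:ℝ)+1) * (x^2/4)^k / ((k ! : ℝ) * ((k+1)! : ℝ)) := by
        rw [Real.norm_eq_abs, abs_div, abs_of_pos hkf]
        gcongr
    _ = (x^2/4)^k / ((k ! : ℝ) * (k ! : ℝ)) := by
        rw [fact_succ']
        have h4 : ((k:ℝ)+1) ≠ 0 := by positivity
        field_simp
    _ ≤ (x^2/4)^k / (k ! : ℝ) := div_fact_le _ (by positivity) k k

lemma summable_u0 (R : ℝ) : Summable (fun k : ℕ =>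
    ((k:ℝ)+1) * (R/2)^(2*k) / ((k ! : ℝ) * (k !))) := by
  apply Summable.of_norm_bounded (Real.summable_pow_div_factorial (2 * (R^2/4)))
  intro k
  have h1 : ((k:ℝ)+1) ≤ 2^k := by exact_mod_cast Nat.lt_two_pow_self (n := k)
  calc ‖((k:ℝ)+1) * (R/2)^(2*k) / ((k ! : ℝ) * (k !))‖
      = ((k:ℝ)+1) * (R^2/4)^k / ((k ! : ℝ) * (k !)) := by
        rw [Real.norm_eq_abs, abs_div, abs_mul, abs_pow, abs_sq_pow_eq,
          abs_of_nonneg (by positivity : (0:ℝ) ≤ (k:ℝ)+1),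
          abs_of_pos (by positivity : (0:ℝ) < (k ! : ℝ) * k !)]
    _ ≤ ((k:ℝ)+1) * (R^2/4)^k / (k ! : ℝ) := div_fact_le _ (by positivity) k k
    _ ≤ (2:ℝ)^k * (R^2/4)^k / (k ! : ℝ) := by
        gcongr
    _ = (2*(R^2/4))^k / (k ! : ℝ) := by rw [mul_pow]

-- term derivatives
lemma hasDerivAt_term_I0 (k : ℕ) (y : ℝ) :
    HasDerivAt (fun z : ℝ => (z/2)^(2*k) / ((k ! : ℝ) * (k ! : ℝ)))
      (((2*k : ℕ) : ℝ) * (y/2)^(2*k-1) * (1/2) / ((k ! : ℝ) * (k ! : ℝ))) y :=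
  (((hasDerivAt_id y).div_const 2).pow (2*k)).div_const _

lemma hasDerivAt_term_I1 (k : ℕ) (y : ℝ) :
    HasDerivAt (fun z : ℝ => (z/2)^(2*k+1) / ((k ! : ℝ) * ((k+1)! : ℝ)))
      (((2*k+1 : ℕ) : ℝ) * (y/2)^(2*k) * (1/2) / ((k ! : ℝ) * ((k+1)! : ℝ))) y := by
  have h := (((hasDerivAt_id y).div_const 2).pow (2*k+1)).div_const ((k ! : ℝ) * ((k+1)! : ℝ))
  simpa using h

-- bound for I0 derivative terms on a ball of radius R ≥ 2
lemma d0_bound {R : ℝ} (hR : 2 ≤ R) {y : ℝ} (hy : |y| < R) (k : ℕ) :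
    ‖((2*k : ℕ) : ℝ) * (y/2)^(2*k-1) * (1/2) / ((k ! : ℝ) * (k ! : ℝ))‖
      ≤ ((k:ℝ)+1) * (R/2)^(2*k) / ((k ! : ℝ) * (k !)) := by
  have hR2 : (1:ℝ) ≤ R/2 := by linarith
  have hy2 : |y/2| ≤ R/2 := by rw [abs_div]; simp only [abs_two]; linarith [abs_nonneg y]
  have hpow : |y/2|^(2*k-1) ≤ (R/2)^(2*k) :=
    le_trans (pow_le_pow_left₀ (abs_nonneg _) hy2 _) (pow_le_pow_right₀ hR2 (Nat.sub_le _ _))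
  have hnum : |((2*k:ℕ):ℝ) * (y/2)^(2*k-1) * (1/2)| ≤ ((k:ℝ)+1) * (R/2)^(2*k) := by
    rw [abs_mul, abs_mul, abs_pow, abs_of_nonneg (by positivity : (0:ℝ) ≤ ((2*k:ℕ):ℝ)),
      abs_of_nonneg (by norm_num : (0:ℝ) ≤ (1:ℝ)/2)]
    calc ((2*k:ℕ):ℝ) * |y/2|^(2*k-1) * (1/2) = ((k:ℕ):ℝ) * |y/2|^(2*k-1) := by push_cast; ring
      _ ≤ ((k:ℝ)+1) * (R/2)^(2*k) := by
          apply mul_le_mul (by linarith) hpow (by positivity) (by positivity)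
  rw [Real.norm_eq_abs, abs_div, abs_of_pos (by positivity : (0:ℝ) < (k ! : ℝ) * (k ! : ℝ))]
  gcongr

lemma d1_bound {R : ℝ} (hR : 2 ≤ R) {y : ℝ} (hy : |y| < R) (k : ℕ) :
    ‖((2*k+1 : ℕ) : ℝ) * (y/2)^(2*k) * (1/2) / ((k ! : ℝ) * ((k+1)! : ℝ))‖
      ≤ ((k:ℝ)+1) * (R/2)^(2*k) / ((k ! : ℝ) * (k !)) := by
  have hR2 : (1:ℝ) ≤ R/2 := by linarith
  have hy2 : |y/2| ≤ R/2 := by rw [abs_div]; simp only [abs_two]; linarith [abs_nonneg y]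
  have hpow : |y/2|^(2*k) ≤ (R/2)^(2*k) := pow_le_pow_left₀ (abs_nonneg _) hy2 _
  have hnum : |((2*k+1:ℕ):ℝ) * (y/2)^(2*k) * (1/2)| ≤ ((k:ℝ)+1) * (R/2)^(2*k) := by
    rw [abs_mul, abs_mul, abs_pow, abs_of_nonneg (by positivity : (0:ℝ) ≤ ((2*k+1:ℕ):ℝ)),
      abs_of_nonneg (by norm_num : (0:ℝ) ≤ (1:ℝ)/2)]
    calc ((2*k+1:ℕ):ℝ) * |y/2|^(2*k) * (1/2) = (((2*k+1:ℕ):ℝ) * (1/2)) * |y/2|^(2*k) := by ring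
      _ ≤ ((k:ℝ)+1) * (R/2)^(2*k) := by
          apply mul_le_mul (by push_cast; linarith) hpow (by positivity) (by positivity)
  have hden : (k ! : ℝ) * (k ! : ℝ) ≤ (k ! : ℝ) * ((k+1)! : ℝ) := by
    have : (k ! : ℝ) ≤ ((k+1)! : ℝ) := by
      rw [fact_succ']; nlinarith [fact_pos' k, Nat.cast_nonneg (α := ℝ) k]
    nlinarith [fact_pos' k]
  rw [Real.norm_eq_abs, abs_div, abs_of_pos (by positivity : (0:ℝ) < (k ! : ℝ) * ((k+1)! : ℝ))]
  calc |((2*k+1:ℕ):ℝ) * (y/2)^(2*k) * (1/2)| / ((k ! : ℝ) * ((k+1)! : ℝ))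
      ≤ (((k:ℝ)+1) * (R/2)^(2*k)) / ((k ! : ℝ) * (k ! : ℝ)) := by
        apply div_le_div₀ (by positivity) hnum (by positivity) hden
    _ = _ := rfl

lemma hasDerivAt_bI1 (x : ℝ) : HasDerivAt besselI1 (bI1d x) x := by
  have hx : x ∈ Metric.ball (0:ℝ) (|x|+2) := by
    rw [Metric.mem_ball, Real.dist_eq, sub_zero]; linarith [abs_nonneg x]
  have key := hasDerivAt_tsum_of_isPreconnected
    (u := fun k : ℕ => ((k:ℝ)+1) * ((|x|+2)/2)^(2*k) / ((k ! : ℝ) * (k !)))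
    (summable_u0 (|x|+2)) Metric.isOpen_ball ((convex_ball (0:ℝ) (|x|+2)).isPreconnected)
    (fun k y _ => hasDerivAt_term_I1 k y)
    (fun k y hy => d1_bound (by linarith [abs_nonneg x])
      (by rwa [Metric.mem_ball, Real.dist_eq, sub_zero] at hy) k)
    hx (summable_I1 x) hx
  exact key

lemma hasDerivAt_bI0 (x : ℝ) : HasDerivAt bI0 (besselI1 x) x := by
  have hx : x ∈ Metric.ball (0:ℝ) (|x|+2) := by
    rw [Metric.mem_ball, Real.dist_eq, sub_zero]; linarith [abs_nonneg x]
  have key := hasDerivAt_tsum_of_isPreconnected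
    (u := fun k : ℕ => ((k:ℝ)+1) * ((|x|+2)/2)^(2*k) / ((k ! : ℝ) * (k !)))
    (summable_u0 (|x|+2)) Metric.isOpen_ball ((convex_ball (0:ℝ) (|x|+2)).isPreconnected)
    (fun k y _ => hasDerivAt_term_I0 k y)
    (fun k y hy => d0_bound (by linarith [abs_nonneg x])
      (by rwa [Metric.mem_ball, Real.dist_eq, sub_zero] at hy) k)
    hx (summable_I0 x) hx
  have hsum : Summable (fun k : ℕ => ((2*k : ℕ) : ℝ) * (x/2)^(2*k-1) * (1/2) / ((k ! : ℝ) * (k ! : ℝ))) := by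
    apply Summable.of_norm_bounded (summable_u0 (|x|+2))
    exact fun k => d0_bound (by linarith [abs_nonneg x]) (by linarith [abs_nonneg x] : |x| < |x|+2) k
  have hshift : (∑' k : ℕ, ((2*k : ℕ) : ℝ) * (x/2)^(2*k-1) * (1/2) / ((k ! : ℝ) * (k ! : ℝ)))
      = besselI1 x := by
    rw [hsum.tsum_eq_zero_add]
    simp only [Nat.mul_zero, Nat.cast_zero, zero_mul, zero_div, zero_add]
    rw [besselI1]
    apply tsum_congr
    intro k
    have h1 : 2*(k+1)-1 = 2*k+1 := by omega
    rw [h1, fact_succ']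
    have hk : (k ! : ℝ) ≠ 0 := (fact_pos' k).ne'
    have hk1 : ((k+1)! : ℝ) ≠ 0 := (fact_pos' (k+1)).ne'
    have hk2 : ((k:ℝ)+1) ≠ 0 := by positivity
    push_cast
    field_simp
  rw [← hshift]
  exact key

-- the key identity  x·I1'(x) = x·I0(x) − I1(x)
lemma L4 (x : ℝ) : x * bI0 x = x * bI1d x + besselI1 x := by
  rw [bI0, bI1d, besselI1, ← tsum_mul_left, ← tsum_mul_left,
    ← Summable.tsum_add ((summable_I1d x).mul_left x) (summable_I1 x)]
  apply tsum_congr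
  intro k
  have hk : (k ! : ℝ) ≠ 0 := (fact_pos' k).ne'
  have hk2 : ((k:ℝ)+1) ≠ 0 := by positivity
  rw [fact_succ', pow_succ]
  push_cast
  field_simp
  ring

lemma hasDerivAt_bg (x : ℝ) : HasDerivAt (fun y : ℝ => y * besselI1 y) (x * bI0 x) x := by
  have h := (hasDerivAt_id x).mul (hasDerivAt_bI1 x)
  simp only [id_eq, one_mul] at h
  refine h.congr_deriv ?_
  have := L4 x
  linarith

lemma hasDerivAt_bh (x : ℝ) : HasDerivAt (fun y : ℝ => y * bI0 y) (bI0 x + x * besselI1 x) x := by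
  have h := (hasDerivAt_id x).mul (hasDerivAt_bI0 x)
  simp only [id_eq, one_mul] at h
  exact h

noncomputable def bF (y : ℝ) : ℝ :=
  (y * bI0 y)^2 - (y * besselI1 y)^2 - besselI1 y * (y * bI0 y)

lemma hasDerivAt_bF (x : ℝ) :
    HasDerivAt bF (x * (bI0 x^2 - besselI1 x^2)) x := by
  have h1 : HasDerivAt (fun y : ℝ => (y * bI0 y)^2)
      (2 * (x * bI0 x) * (bI0 x + x * besselI1 x)) x := by
    have := (hasDerivAt_bh x).pow 2
    refine this.congr_deriv ?_; push_cast; ring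
  have h2 : HasDerivAt (fun y : ℝ => (y * besselI1 y)^2)
      (2 * (x * besselI1 x) * (x * bI0 x)) x := by
    have := (hasDerivAt_bg x).pow 2
    refine this.congr_deriv ?_; push_cast; ring
  have h3 : HasDerivAt (fun y : ℝ => besselI1 y * (y * bI0 y))
      (bI1d x * (x * bI0 x) + besselI1 x * (bI0 x + x * besselI1 x)) x :=
    (hasDerivAt_bI1 x).mul (hasDerivAt_bh x)
  have h := (h1.sub h2).sub h3
  refine h.congr_deriv ?_
  have h4 := L4 x
  linear_combination (bI0 x) * h4

-- positivity facts
lemma bI0_ge_one (x : ℝ) : 1 ≤ bI0 x := by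
  have h := Summable.le_tsum (summable_I0 x) 0 (fun j _ => div_nonneg (by rw [pow_mul]; positivity) (by positivity))
  simpa [bI0] using h

lemma bI1_nonneg {x : ℝ} (hx : 0 ≤ x) : 0 ≤ besselI1 x := by
  apply tsum_nonneg
  intro k
  positivity

lemma bI1_pos {x : ℝ} (hx : 0 < x) : 0 < besselI1 x := by
  apply Summable.tsum_pos (summable_I1 x)
    (fun k => div_nonneg (pow_nonneg (by linarith) _) (by positivity)) 0
  simp only [Nat.mul_zero, zero_add, pow_one, Nat.factorial_zero, Nat.factorial_one]
  norm_num
  linarith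

lemma bI1_le_bI0 {x : ℝ} (hx : 0 ≤ x) : besselI1 x + 1/2 ≤ bI0 x := by
  set a : ℕ → ℝ := fun k => (x/2)^(2*k) / ((k ! : ℝ) * (k ! : ℝ)) with ha
  have hs : Summable a := summable_I0 x
  have hs1 : Summable (fun k => a (k+1)) := (summable_nat_add_iff 1).2 hs
  have hterm : ∀ k : ℕ, (x/2)^(2*k+1) / ((k ! : ℝ) * ((k+1)! : ℝ)) ≤ (a k + a (k+1))/2 := by
    intro k
    have hA : ((x/2)^k / (k ! : ℝ))^2 = a k := by
      rw [ha]; simp only [div_pow, ← pow_mul, Nat.mul_comm k 2]; ring_nf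
    have hB : ((x/2)^(k+1) / ((k+1)! : ℝ))^2 = a (k+1) := by
      rw [ha]; simp only [div_pow, ← pow_mul, Nat.mul_comm (k+1) 2]; ring_nf
    have key := two_mul_le_add_sq ((x/2)^k / (k ! : ℝ)) ((x/2)^(k+1) / ((k+1)! : ℝ))
    rw [hA, hB] at key
    have heq : (x/2)^(2*k+1) / ((k ! : ℝ) * ((k+1)! : ℝ))
        = ((x/2)^k / (k ! : ℝ)) * ((x/2)^(k+1) / ((k+1)! : ℝ)) := by
      rw [div_mul_div_comm, ← pow_add]
      congr 2
      omega
    rw [heq]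
    linarith
  have h1 : besselI1 x ≤ ∑' k, (a k + a (k+1))/2 :=
    Summable.tsum_le_tsum hterm (summable_I1 x) ((hs.add hs1).div_const 2)
  have h2 : (∑' k, (a k + a (k+1))/2) = (bI0 x + (bI0 x - 1))/2 := by
    rw [tsum_div_const, hs.tsum_add hs1]
    have h3 : bI0 x = a 0 + ∑' k, a (k+1) := hs.tsum_eq_zero_add
    have h4 : a 0 = 1 := by rw [ha]; norm_num
    have h6 : (∑' k, a k) = bI0 x := rfl
    rw [h6, h3, h4]
    ring
  linarith

lemma bF_zero : bF 0 = 0 := by simp [bF]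

lemma bF_pos {x : ℝ} (hx : 0 < x) : 0 < bF x := by
  have hmono : StrictMonoOn bF (Set.Ici 0) := by
    apply strictMonoOn_of_deriv_pos (convex_Ici 0)
    · exact fun y _ => (hasDerivAt_bF y).continuousAt.continuousWithinAt
    · intro y hy
      rw [interior_Ici] at hy
      rw [(hasDerivAt_bF y).deriv]
      have h1 := bI1_le_bI0 (le_of_lt hy)
      have h2 := bI1_nonneg (le_of_lt hy)
      have h3 := bI0_ge_one y
      have h4 : (0:ℝ) < y := hy
      have h5 : 0 < bI0 y^2 - besselI1 y^2 := by nlinarith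
      exact mul_pos h4 h5
  have h := hmono (Set.mem_Ici.mpr le_rfl) (Set.mem_Ici.mpr hx.le) hx
  rwa [bF_zero] at h

/-- `x ↦ x · I₁(x)` is strictly log-concave on `(0, ∞)`. -/
theorem strictLogConcave_mul_besselI1 :
    StrictConcaveOn ℝ (Set.Ioi (0 : ℝ)) (fun x => Real.log (x * besselI1 x)) := by
  apply strictConcaveOn_of_deriv2_neg (convex_Ioi 0)
  · intro y hy
    have hy' : (0:ℝ) < y := hy
    have hne : y * besselI1 y ≠ 0 := ne_of_gt (mul_pos hy' (bI1_pos hy'))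
    exact (((hasDerivAt_bg y).continuousAt.log hne)).continuousWithinAt
  · intro x hx
    rw [interior_Ioi] at hx
    have hx' : (0:ℝ) < x := hx
    have hder : ∀ y ∈ Set.Ioi (0:ℝ), deriv (fun z => Real.log (z * besselI1 z)) y
        = (y * bI0 y) / (y * besselI1 y) := by
      intro y hy
      have hy' : (0:ℝ) < y := hy
      have hne : y * besselI1 y ≠ 0 := ne_of_gt (mul_pos hy' (bI1_pos hy'))
      exact ((hasDerivAt_bg y).log hne).deriv
    have hEq : deriv (fun z => Real.log (z * besselI1 z))
        =ᶠ[nhds x] (fun y => (y * bI0 y) / (y * besselI1 y)) :=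
      Filter.eventuallyEq_of_mem (isOpen_Ioi.mem_nhds hx') hder
    have h2 : deriv^[2] (fun z => Real.log (z * besselI1 z)) x
        = deriv (fun y => (y * bI0 y) / (y * besselI1 y)) x := by
      show deriv (deriv (fun z => Real.log (z * besselI1 z))) x = _
      exact hEq.deriv_eq
    rw [h2]
    have hne : x * besselI1 x ≠ 0 := ne_of_gt (mul_pos hx' (bI1_pos hx'))
    have hdiv : HasDerivAt (fun y => (y * bI0 y) / (y * besselI1 y))
        (((bI0 x + x * besselI1 x) * (x * besselI1 x) - (x * bI0 x) * (x * bI0 x))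
          / (x * besselI1 x)^2) x :=
      (hasDerivAt_bh x).div (hasDerivAt_bg x) hne
    rw [hdiv.deriv]
    apply div_neg_of_neg_of_pos
    · have hF := bF_pos hx'
      have hkey : (bI0 x + x * besselI1 x) * (x * besselI1 x) - (x * bI0 x) * (x * bI0 x)
          = -bF x := by rw [bF]; ring
      rw [hkey]; linarith
    · exact pow_pos (mul_pos hx' (bI1_pos hx')) 2
end

section
/- Let h(u) = −log( Σ_{k=1}^∞ u^k y^k / ((k-1)! k! μ^k) ) for fixed y, μ > 0. Then h is strictly convex and strictly decreasing on (0, ∞). -/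
open scoped Nat

open Real Set

namespace NLS

noncomputable def H (t : ℝ) : ℝ := ∑' k : ℕ, t ^ k / ((k ! : ℝ) * ((k+1)! : ℝ))
noncomputable def G (t : ℝ) : ℝ := ∑' k : ℕ, t ^ k / ((k ! : ℝ) * (k ! : ℝ))
noncomputable def g (t : ℝ) : ℝ := ∑' k : ℕ, t ^ (k+1) / ((k ! : ℝ) * ((k+1)! : ℝ))

lemma fact_pos' (k : ℕ) : (0:ℝ) < (k ! : ℝ) := by exact_mod_cast k.factorial_pos
lemma fact_one_le (k : ℕ) : (1:ℝ) ≤ (k ! : ℝ) := by exact_mod_cast k.factorial_pos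

lemma summable_H (t : ℝ) (ht : 0 ≤ t) :
    Summable (fun k : ℕ => t ^ k / ((k ! : ℝ) * ((k+1)! : ℝ))) := by
  refine Summable.of_nonneg_of_le (fun k => by positivity) (fun k => ?_)
    (Real.summable_pow_div_factorial t)
  have h1 := fact_one_le (k+1)
  have h2 := fact_pos' k
  exact div_le_div_of_nonneg_left (pow_nonneg ht k) h2 (le_mul_of_one_le_right h2.le h1)

lemma summable_G (t : ℝ) (ht : 0 ≤ t) :
    Summable (fun k : ℕ => t ^ k / ((k ! : ℝ) * (k ! : ℝ))) := by
  refine Summable.of_nonneg_of_le (fun k => by positivity) (fun k => ?_)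
    (Real.summable_pow_div_factorial t)
  have h1 := fact_one_le k
  have h2 := fact_pos' k
  exact div_le_div_of_nonneg_left (pow_nonneg ht k) h2 (le_mul_of_one_le_right h2.le h1)

lemma summable_g (t : ℝ) (ht : 0 ≤ t) :
    Summable (fun k : ℕ => t ^ (k+1) / ((k ! : ℝ) * ((k+1)! : ℝ))) := by
  have := (summable_H t ht).mul_left t
  refine this.congr fun k => ?_
  rw [pow_succ]; ring

lemma g_eq (t : ℝ) (ht : 0 ≤ t) : g t = t * H t := by
  unfold g H
  rw [← tsum_mul_left]
  refine tsum_congr fun k => ?_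
  rw [pow_succ]; ring

end NLS

namespace NLS

lemma H_ge_one (t : ℝ) (ht : 0 ≤ t) : 1 ≤ H t := by
  have h := Summable.le_tsum (summable_H t ht) 0 (fun j _ => by positivity)
  simpa [H] using h

lemma G_ge_one (t : ℝ) (ht : 0 ≤ t) : 1 ≤ G t := by
  have h := Summable.le_tsum (summable_G t ht) 0 (fun j _ => by positivity)
  simpa [G] using h

lemma H_pos (t : ℝ) (ht : 0 ≤ t) : 0 < H t := lt_of_lt_of_le one_pos (H_ge_one t ht)
lemma G_pos (t : ℝ) (ht : 0 ≤ t) : 0 < G t := lt_of_lt_of_le one_pos (G_ge_one t ht)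

lemma g_pos (t : ℝ) (ht : 0 < t) : 0 < g t := by
  rw [g_eq t ht.le]; exact mul_pos ht (H_pos t ht.le)

lemma hasDerivAt_g (t : ℝ) (ht : 0 < t) : HasDerivAt g (G t) t := by
  have htm : t ∈ Ioo (0:ℝ) (t+1) := ⟨ht, by linarith⟩
  have key : HasDerivAt (fun z : ℝ => ∑' k : ℕ, z ^ (k+1) / ((k ! : ℝ) * ((k+1)! : ℝ)))
      (∑' k : ℕ, t ^ k / ((k ! : ℝ) * (k ! : ℝ))) t := by
    refine hasDerivAt_tsum_of_isPreconnected (summable_G (t+1) (by linarith))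
      isOpen_Ioo (convex_Ioo _ _).isPreconnected
      (g := fun k y => y ^ (k+1) / ((k ! : ℝ) * ((k+1)! : ℝ)))
      (g' := fun k y => y ^ k / ((k ! : ℝ) * (k ! : ℝ)))
      (fun k y _ => ?_) (fun k y hy => ?_) htm (summable_g t ht.le) htm
    · have h := (hasDerivAt_pow (k+1) y).div_const ((k ! : ℝ) * ((k+1)! : ℝ))
      refine h.congr_deriv ?_
      have hf : ((k+1)! : ℝ) = (k+1) * (k ! : ℝ) := by exact_mod_cast Nat.factorial_succ k
      have h2 := fact_pos' k
      rw [Nat.add_sub_cancel, hf]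
      push_cast
      field_simp
    · rw [Real.norm_eq_abs, abs_div, abs_of_nonneg (by positivity : (0:ℝ) ≤ (k ! : ℝ) * (k ! : ℝ)),
        abs_pow]
      gcongr
      rw [abs_of_pos hy.1]
      exact hy.2.le
  exact key

lemma hasDerivAt_G (t : ℝ) (ht : 0 < t) : HasDerivAt G (H t) t := by
  have htm : t ∈ Ioo (0:ℝ) (t+1) := ⟨ht, by linarith⟩
  have hu : Summable (fun k : ℕ => (t+1) ^ (k-1) / (((k-1)! : ℝ))) := by
    refine (summable_nat_add_iff 1).mp ?_
    simpa using Real.summable_pow_div_factorial (t+1)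
  have hbound : ∀ (k : ℕ) (y : ℝ), y ∈ Ioo (0:ℝ) (t+1) →
      ‖(k : ℝ) * y ^ (k-1) / ((k ! : ℝ) * (k ! : ℝ))‖ ≤ (t+1) ^ (k-1) / (((k-1)! : ℝ)) := by
    intro k y hy
    have hy1 : (0:ℝ) < y := hy.1
    have hy2 : y ≤ t + 1 := hy.2.le
    match k with
    | 0 => simp
    | (k+1) =>
      have hf : ((k+1)! : ℝ) = ((k:ℝ)+1) * (k ! : ℝ) := by
        push_cast [Nat.factorial_succ]; ring
      have hk2 : (0:ℝ) < (k ! : ℝ) := fact_pos' k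
      have hk3 : (0:ℝ) < ((k+1)! : ℝ) := fact_pos' (k+1)
      have e : ((k+1:ℕ):ℝ) * y ^ (k+1-1) / (((k+1)! : ℝ) * ((k+1)! : ℝ))
          = y ^ k / ((k ! : ℝ) * ((k+1)! : ℝ)) := by
        simp only [Nat.add_sub_cancel]
        rw [hf]
        push_cast
        field_simp
      rw [e, Real.norm_eq_abs, abs_div,
        abs_of_nonneg (by positivity : (0:ℝ) ≤ (k ! : ℝ) * ((k+1)! : ℝ)), abs_pow,
        abs_of_pos hy1]
      simp only [Nat.add_sub_cancel]
      calc y ^ k / ((k ! : ℝ) * ((k+1)! : ℝ))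
          ≤ (t+1) ^ k / ((k ! : ℝ) * ((k+1)! : ℝ)) := by
            gcongr
        _ ≤ (t+1) ^ k / ((k ! : ℝ)) :=
            div_le_div_of_nonneg_left (by positivity) hk2
              (le_mul_of_one_le_right hk2.le (fact_one_le (k+1)))
  have key : HasDerivAt (fun z : ℝ => ∑' k : ℕ, z ^ k / ((k ! : ℝ) * (k ! : ℝ)))
      (∑' k : ℕ, (k : ℝ) * t ^ (k-1) / ((k ! : ℝ) * (k ! : ℝ))) t := by
    refine hasDerivAt_tsum_of_isPreconnected hu
      isOpen_Ioo (convex_Ioo _ _).isPreconnected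
      (g := fun k y => y ^ k / ((k ! : ℝ) * (k ! : ℝ)))
      (g' := fun k y => (k : ℝ) * y ^ (k-1) / ((k ! : ℝ) * (k ! : ℝ)))
      (fun k y _ => (hasDerivAt_pow k y).div_const _) hbound htm (summable_G t ht.le) htm
  have hsum : Summable (fun k : ℕ => (k : ℝ) * t ^ (k-1) / ((k ! : ℝ) * (k ! : ℝ))) :=
    hu.of_norm_bounded (fun k => hbound k t htm)
  have : (∑' k : ℕ, (k : ℝ) * t ^ (k-1) / ((k ! : ℝ) * (k ! : ℝ))) = H t := by
    rw [Summable.tsum_eq_zero_add hsum]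
    simp only [Nat.cast_zero, zero_mul, zero_div, zero_add, Nat.add_sub_cancel]
    unfold H
    refine tsum_congr fun k => ?_
    have hf : ((k+1)! : ℝ) = (k+1) * (k ! : ℝ) := by exact_mod_cast Nat.factorial_succ k
    have h2 := fact_pos' k
    push_cast [hf]
    field_simp
  rw [this] at key
  exact key

end NLS

namespace NLS

lemma tsum_cauchy_schwarz (f h : ℕ → ℝ) (hf0 : ∀ k, 0 ≤ f k) (hh0 : ∀ k, 0 ≤ h k)
    (Hf : Summable (fun k => f k ^ 2)) (Hh : Summable fun k => h k ^ 2) :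
    (∑' k, f k * h k) ^ 2 ≤ (∑' k, f k ^ 2) * (∑' k, h k ^ 2) := by
  set A := ∑' k, f k ^ 2 with hA
  set B := ∑' k, h k ^ 2 with hB
  have hA0 : 0 ≤ A := tsum_nonneg fun k => sq_nonneg _
  have hB0 : 0 ≤ B := tsum_nonneg fun k => sq_nonneg _
  have hsum : Summable (fun k => f k * h k) := by
    refine Summable.of_nonneg_of_le (fun k => mul_nonneg (hf0 k) (hh0 k)) (fun k => ?_)
      ((Hf.add Hh).mul_left (1/2 : ℝ))
    have := sq_nonneg (f k - h k)
    simp only [one_div]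
    nlinarith
  have hle : (∑' k, f k * h k) ≤ Real.sqrt (A * B) := by
    refine Summable.tsum_le_of_sum_le hsum fun s => ?_
    have h1 : (∑ k ∈ s, f k * h k) ^ 2 ≤ (∑ k ∈ s, f k ^ 2) * (∑ k ∈ s, h k ^ 2) :=
      Finset.sum_mul_sq_le_sq_mul_sq s f h
    have h2 : (∑ k ∈ s, f k ^ 2) ≤ A := Summable.sum_le_tsum s (fun k _ => sq_nonneg _) Hf
    have h3 : (∑ k ∈ s, h k ^ 2) ≤ B := Summable.sum_le_tsum s (fun k _ => sq_nonneg _) Hh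
    have hs2 : (0:ℝ) ≤ ∑ k ∈ s, f k ^ 2 := Finset.sum_nonneg fun k _ => sq_nonneg _
    have hs3 : (0:ℝ) ≤ ∑ k ∈ s, h k ^ 2 := Finset.sum_nonneg fun k _ => sq_nonneg _
    have h4 : (∑ k ∈ s, f k * h k) ^ 2 ≤ A * B :=
      h1.trans (mul_le_mul h2 h3 hs3 hA0)
    have h5 : (0:ℝ) ≤ ∑ k ∈ s, f k * h k :=
      Finset.sum_nonneg fun k _ => mul_nonneg (hf0 k) (hh0 k)
    exact (Real.le_sqrt h5 (mul_nonneg hA0 hB0)).mpr h4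
  have h0 : 0 ≤ ∑' k, f k * h k := tsum_nonneg fun k => mul_nonneg (hf0 k) (hh0 k)
  calc (∑' k, f k * h k) ^ 2 ≤ Real.sqrt (A * B) ^ 2 := by gcongr
    _ = A * B := Real.sq_sqrt (mul_nonneg hA0 hB0)

lemma core (t : ℝ) (ht : 0 < t) : t * H t ^ 2 < G t ^ 2 := by
  set s := Real.sqrt t with hsdef
  have hs : s ^ 2 = t := Real.sq_sqrt ht.le
  have hs0 : 0 < s := Real.sqrt_pos.mpr ht
  set F : ℕ → ℝ := fun k => s ^ k / (k ! : ℝ) with hF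
  set Fh : ℕ → ℝ := fun k => s ^ (k+2) / ((k+1)! : ℝ) with hFh
  have hF2 : ∀ k, F k ^ 2 = t ^ k / ((k ! : ℝ) * (k ! : ℝ)) := by
    intro k
    rw [hF]
    rw [div_pow, ← pow_mul, mul_comm k 2, pow_mul, hs, sq]
  have hFh2 : ∀ k, Fh k ^ 2 = t ^ (k+2) / (((k+1)! : ℝ) * ((k+1)! : ℝ)) := by
    intro k
    rw [hFh]
    rw [div_pow, ← pow_mul, mul_comm (k+2) 2, pow_mul, hs, sq]
  have hFFh : ∀ k, F k * Fh k = t ^ (k+1) / ((k ! : ℝ) * ((k+1)! : ℝ)) := by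
    intro k
    rw [hF, hFh]
    rw [div_mul_div_comm, ← pow_add]
    have : k + (k + 2) = 2 * (k+1) := by ring
    rw [this, pow_mul, hs]
  have HsF2 : Summable (fun k => F k ^ 2) := by
    refine (summable_G t ht.le).congr fun k => ?_
    rw [hF2]
  have HsFh2 : Summable (fun k => Fh k ^ 2) := by
    refine Summable.of_nonneg_of_le (fun k => sq_nonneg _) (fun k => ?_)
      ((Real.summable_pow_div_factorial t).mul_left (t^2))
    rw [hFh2]
    have e : t ^ (k+2) = t^2 * t^k := by ring
    rw [e, mul_div_assoc]
    have hk2 : (0:ℝ) < (k ! : ℝ) := fact_pos' k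
    have hfle : (k ! : ℝ) ≤ ((k+1)! : ℝ) * ((k+1)! : ℝ) := by
      have h1 : (k ! : ℝ) ≤ ((k+1)! : ℝ) := by
        exact_mod_cast Nat.factorial_le (Nat.le_succ k)
      exact h1.trans (le_mul_of_one_le_right (fact_pos' (k+1)).le (fact_one_le (k+1)))
    exact mul_le_mul_of_nonneg_left
      (div_le_div_of_nonneg_left (pow_nonneg ht.le k) hk2 hfle) (by positivity)
  have hGm1 : (∑' k : ℕ, t ^ (k+1) / (((k+1)! : ℝ) * ((k+1)! : ℝ))) = G t - 1 := by
    have hsum := summable_G t ht.le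
    have := Summable.tsum_eq_zero_add hsum
    unfold G
    rw [this]
    simp
  have hFh2sum : (∑' k, Fh k ^ 2) = t * (G t - 1) := by
    rw [← hGm1, ← tsum_mul_left]
    refine tsum_congr fun k => ?_
    rw [hFh2]
    rw [pow_succ, pow_add]
    ring
  have hF2sum : (∑' k, F k ^ 2) = G t := by
    unfold G
    exact tsum_congr fun k => hF2 k
  have hFFhsum : (∑' k, F k * Fh k) = t * H t := by
    rw [← g_eq t ht.le]
    unfold g
    exact tsum_congr fun k => hFFh k
  have CS := tsum_cauchy_schwarz F Fh (fun k => by positivity) (fun k => by positivity)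
    HsF2 HsFh2
  rw [hFFhsum, hF2sum, hFh2sum] at CS
  -- (t * H t)^2 ≤ G t * (t * (G t - 1))
  have hG1 : 1 ≤ G t := G_ge_one t ht.le
  have hH : 0 < H t := H_pos t ht.le
  nlinarith [sq_nonneg (H t), sq_nonneg (G t)]

end NLS

namespace NLS

lemma hasDerivAt_neglog (t : ℝ) (ht : 0 < t) :
    HasDerivAt (fun y => -Real.log (g y)) (-(G t / g t)) t := by
  have h1 := (Real.hasDerivAt_log (g_pos t ht).ne').comp t (hasDerivAt_g t ht)
  have h2 := h1.neg
  have h3 : -((g t)⁻¹ * G t) = -(G t / g t) := by rw [div_eq_mul_inv, mul_comm]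
  exact h3 ▸ h2

lemma main : StrictConvexOn ℝ (Ioi (0:ℝ)) (fun t => -Real.log (g t)) ∧
    StrictAntiOn (fun t => -Real.log (g t)) (Ioi (0:ℝ)) := by
  set f : ℝ → ℝ := fun t => -Real.log (g t) with hfdef
  have hderiv : ∀ x ∈ Ioi (0:ℝ), deriv f x = -(G x / g x) := fun x hx =>
    (hasDerivAt_neglog x hx).deriv
  have hcont : ContinuousOn f (Ioi (0:ℝ)) := fun x hx =>
    ((hasDerivAt_neglog x hx).continuousAt).continuousWithinAt
  constructor
  · refine strictConvexOn_of_deriv2_pos (convex_Ioi 0) hcont fun x hx => ?_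
    rw [interior_Ioi] at hx
    have hgp := g_pos x hx
    have hphi : HasDerivAt (fun y => -(G y / g y)) ((G x ^ 2 - H x * g x) / (g x) ^ 2) x := by
      have hd := ((hasDerivAt_G x hx).div (hasDerivAt_g x hx) hgp.ne').neg
      refine hd.congr_deriv ?_
      ring
    have heq : deriv f =ᶠ[nhds x] (fun y => -(G y / g y)) := by
      filter_upwards [isOpen_Ioi.mem_nhds hx] with z hz
      exact hderiv z hz
    have e2 : deriv^[2] f x = (G x ^ 2 - H x * g x) / (g x) ^ 2 := by
      show deriv (deriv f) x = _
      rw [heq.deriv_eq]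
      exact hphi.deriv
    rw [e2]
    have hnum : 0 < G x ^ 2 - H x * g x := by
      rw [g_eq x hx.le]
      have := core x hx
      nlinarith
    positivity
  · refine strictAntiOn_of_deriv_neg (convex_Ioi 0) hcont fun x hx => ?_
    rw [interior_Ioi] at hx
    rw [hderiv x hx]
    exact neg_lt_zero.mpr (div_pos (G_pos x hx.le) (g_pos x hx))

end NLS

/-- For fixed `y, μ > 0`, the function
`h(u) = -log(Σ_{k=1}^∞ uᵏ yᵏ / ((k-1)! k! μᵏ))` is strictly convex
and strictly decreasing on `(0, ∞)`. -/
theorem neg_log_series_strictConvex_strictAnti (y μ : ℝ) (hy : 0 < y) (hμ : 0 < μ) :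
    StrictConvexOn ℝ (Set.Ioi (0 : ℝ))
      (fun u => -Real.log (∑' k : ℕ,
        u ^ (k + 1) * y ^ (k + 1) / ((k ! : ℝ) * ((k + 1)! : ℝ) * μ ^ (k + 1)))) ∧
    StrictAntiOn
      (fun u => -Real.log (∑' k : ℕ,
        u ^ (k + 1) * y ^ (k + 1) / ((k ! : ℝ) * ((k + 1)! : ℝ) * μ ^ (k + 1))))
      (Set.Ioi (0 : ℝ)) := by
  set c : ℝ := y / μ with hc
  have hcpos : 0 < c := div_pos hy hμ
  have hfun : (fun u : ℝ => -Real.log (∑' k : ℕ,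
      u ^ (k + 1) * y ^ (k + 1) / ((k ! : ℝ) * ((k + 1)! : ℝ) * μ ^ (k + 1))))
      = fun u => -Real.log (NLS.g (c * u)) := by
    funext u
    have e : (∑' k : ℕ, u ^ (k + 1) * y ^ (k + 1) / ((k ! : ℝ) * ((k + 1)! : ℝ) * μ ^ (k + 1)))
        = NLS.g (c * u) := by
      unfold NLS.g
      refine tsum_congr fun k => ?_
      rw [hc, mul_pow, div_pow]
      have h2 := NLS.fact_pos' k
      have h3 := NLS.fact_pos' (k+1)
      field_simp
    rw [e]
  rw [hfun]
  obtain ⟨hconv, hanti⟩ := NLS.main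
  constructor
  · refine ⟨convex_Ioi 0, fun a ha b hb hab p q hp hq hpq => ?_⟩
    have hmem : c * a ∈ Set.Ioi (0:ℝ) := mul_pos hcpos ha
    have hmem' : c * b ∈ Set.Ioi (0:ℝ) := mul_pos hcpos hb
    have hne : c * a ≠ c * b := fun h => hab (mul_left_cancel₀ hcpos.ne' h)
    have key := hconv.2 hmem hmem' hne hp hq hpq
    have e : p • (c * a) + q • (c * b) = c * (p • a + q • b) := by
      simp only [smul_eq_mul]; ring
    rw [e] at key
    exact key
  · intro a ha b hb hab
    exact hanti (mul_pos hcpos ha) (mul_pos hcpos hb)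
      (mul_lt_mul_of_pos_left hab hcpos)
end
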